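/- arXiv:1107.2143 — 3 statements merged into one kernel-verified Lean document; each statement's English description precedes it below -/
import Mathlib

section
/- Let Λ ≥ 1, λ ∈ (0,1), C > 0 and C₁ > 0 be real constants satisfying C·C₁·(Λ − 1) < 1 − λ. Set γ = 1/C and α² = (Λ·C₁ + γ·λ)/(C₁ + γ). Then α² < 1, and for all nonnegative real numbers e₀, e₁, η₀, η₁, d satisfying (i) e₁² ≤ Λ·e₀² − d² (quasi-orthogonality), (ii) η₁² ≤ λ·η₀² + C·d² (estimator reduction), and (iii) e₀² ≤ C₁·η₀² (reliability upper bound), one has the contraction inequality e₁² + γ·η₁² ≤ α²·(e₀² + γ·η₀²). -/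
/-- Abstract real-number core of the AFEM contraction argument (exact solvers). -/
theorem afem_contraction_step
    (Λ lam C C₁ : ℝ)
    (hΛ : 1 ≤ Λ) (hlam : lam ∈ Set.Ioo (0:ℝ) 1) (hC : 0 < C) (hC₁ : 0 < C₁)
    (hcond : C * C₁ * (Λ - 1) < 1 - lam)
    (γ αsq : ℝ) (hγ : γ = 1 / C)
    (hαsq : αsq = (Λ * C₁ + γ * lam) / (C₁ + γ)) :
    αsq < 1 ∧
    ∀ e₀ e₁ η₀ η₁ d : ℝ,
      0 ≤ e₀ → 0 ≤ e₁ → 0 ≤ η₀ → 0 ≤ η₁ → 0 ≤ d →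
      e₁ ^ 2 ≤ Λ * e₀ ^ 2 - d ^ 2 →
      η₁ ^ 2 ≤ lam * η₀ ^ 2 + C * d ^ 2 →
      e₀ ^ 2 ≤ C₁ * η₀ ^ 2 →
      e₁ ^ 2 + γ * η₁ ^ 2 ≤ αsq * (e₀ ^ 2 + γ * η₀ ^ 2) := by
  obtain ⟨hl0, hl1⟩ := hlam
  have hC' : C ≠ 0 := ne_of_gt hC
  have hγpos : 0 < γ := by rw [hγ]; positivity
  have hden : 0 < C₁ + γ := by linarith
  have hγC : γ * C = 1 := by rw [hγ]; field_simp
  have hkey : αsq * (C₁ + γ) = Λ * C₁ + γ * lam := by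
    rw [hαsq]; field_simp
  have hαlt : αsq < 1 := by
    rw [hαsq, div_lt_one hden]
    have h := (mul_lt_mul_iff_right₀ hγpos).2 hcond
    nlinarith
  refine ⟨hαlt, ?_⟩
  intro e₀ e₁ η₀ η₁ d he₀ he₁ hη₀ hη₁ hd h1 h2 h3
  have hΛα : αsq ≤ Λ := by nlinarith
  nlinarith [mul_le_mul_of_nonneg_left h2 hγpos.le,
             mul_le_mul_of_nonneg_left h3 (sub_nonneg.2 hΛα),
             sq_nonneg η₀, sq_nonneg d]
end

section
/- Let Λ ≥ 1, λ ∈ (0,1), C > 0 and C₁ > 0 be real constants with C·C₁·(Λ − 1) < 1 − λ. Then there exist γ > 0 and α ∈ (0,1) such that for all sequences (e_k), (η_k), (d_k) of nonnegative real numbers satisfying, for every k ∈ ℕ, (i) e_{k+1}² ≤ Λ·e_k² − d_k², (ii) η_{k+1}² ≤ λ·η_k² + C·d_k², and (iii) e_k² ≤ C₁·η_k², one has e_k² + γ·η_k² ≤ α^{2k}·(e₀² + γ·η₀²) for all k; in particular e_k → 0 and η_k → 0 as k → ∞. -/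
/-- Iterated abstract AFEM contraction: geometric decay of the total error and
convergence of errors and estimators to zero. -/
theorem afem_contraction_iterated
    (Λ lam C C₁ : ℝ)
    (hΛ : 1 ≤ Λ) (hlam : lam ∈ Set.Ioo (0:ℝ) 1) (hC : 0 < C) (hC₁ : 0 < C₁)
    (hcond : C * C₁ * (Λ - 1) < 1 - lam) :
    ∃ γ > (0:ℝ), ∃ α ∈ Set.Ioo (0:ℝ) 1,
      ∀ e η d : ℕ → ℝ,
        (∀ k, 0 ≤ e k) → (∀ k, 0 ≤ η k) → (∀ k, 0 ≤ d k) →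
        (∀ k, e (k+1) ^ 2 ≤ Λ * e k ^ 2 - d k ^ 2) →
        (∀ k, η (k+1) ^ 2 ≤ lam * η k ^ 2 + C * d k ^ 2) →
        (∀ k, e k ^ 2 ≤ C₁ * η k ^ 2) →
        (∀ k, e k ^ 2 + γ * η k ^ 2 ≤ α ^ (2 * k) * (e 0 ^ 2 + γ * η 0 ^ 2)) ∧
        Filter.Tendsto e Filter.atTop (nhds 0) ∧
        Filter.Tendsto η Filter.atTop (nhds 0) := by
  obtain ⟨hlam0, hlam1⟩ := hlam
  set γ : ℝ := 1 / C with hγdef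
  have hγ : 0 < γ := by positivity
  set t : ℝ := (C * C₁ * Λ + lam) / (1 + C * C₁) with htdef
  have hden : (0:ℝ) < 1 + C * C₁ := by positivity
  have ht0 : 0 < t := by
    apply div_pos _ hden
    nlinarith [mul_pos hC hC₁, mul_le_mul_of_nonneg_left hΛ (le_of_lt (mul_pos hC hC₁))]
  have ht1 : t < 1 := by
    rw [div_lt_one hden]
    nlinarith
  have htkey : C₁ * (Λ - t) + lam / C = t * γ := by
    have h : t * (1 + C * C₁) = C * C₁ * Λ + lam := by
      rw [htdef, div_mul_cancel₀ _ (ne_of_gt hden)]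
    rw [hγdef]
    field_simp
    nlinarith
  refine ⟨γ, hγ, Real.sqrt t, ⟨Real.sqrt_pos.mpr ht0, ?_⟩, ?_⟩
  · have := Real.sqrt_lt_sqrt (le_of_lt ht0) ht1
    simpa using this
  intro e η d he hη hd h1 h2 h3
  have hstep : ∀ k, e (k+1) ^ 2 + γ * η (k+1) ^ 2 ≤ t * (e k ^ 2 + γ * η k ^ 2) := by
    intro k
    have hΛt : t ≤ Λ := le_trans (le_of_lt ht1) hΛ
    have h3k := h3 k
    have h1k := h1 k
    have h2k := h2 k
    have hηk : 0 ≤ η k ^ 2 := sq_nonneg _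
    -- e(k+1)² + γ η(k+1)² ≤ Λ e² - d² + γ(λ η² + C d²) = Λ e² + (λ/C) η²
    have key : e (k+1) ^ 2 + γ * η (k+1) ^ 2 ≤ Λ * e k ^ 2 + (lam / C) * η k ^ 2 := by
      have hA : γ * (lam * η k ^ 2 + C * d k ^ 2) = lam / C * η k ^ 2 + d k ^ 2 := by
        rw [hγdef, mul_add, ← mul_assoc, ← mul_assoc, one_div_mul_cancel (ne_of_gt hC), one_mul, one_div, inv_mul_eq_div]
      have hB := mul_le_mul_of_nonneg_left h2k (le_of_lt hγ)
      linarith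
    have key2 : Λ * e k ^ 2 + (lam / C) * η k ^ 2 ≤ t * (e k ^ 2 + γ * η k ^ 2) := by
      have : (Λ - t) * e k ^ 2 ≤ (Λ - t) * (C₁ * η k ^ 2) :=
        mul_le_mul_of_nonneg_left h3k (by linarith)
      nlinarith [htkey]
    linarith
  have hgeo : ∀ k, e k ^ 2 + γ * η k ^ 2 ≤ t ^ k * (e 0 ^ 2 + γ * η 0 ^ 2) := by
    intro k
    induction k with
    | zero => simp
    | succ n ih =>
      calc e (n+1) ^ 2 + γ * η (n+1) ^ 2 ≤ t * (e n ^ 2 + γ * η n ^ 2) := hstep n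
        _ ≤ t * (t ^ n * (e 0 ^ 2 + γ * η 0 ^ 2)) :=
            mul_le_mul_of_nonneg_left ih (le_of_lt ht0)
        _ = t ^ (n+1) * (e 0 ^ 2 + γ * η 0 ^ 2) := by ring
  have hαt : ∀ k : ℕ, (Real.sqrt t) ^ (2 * k) = t ^ k := by
    intro k
    rw [pow_mul, Real.sq_sqrt (le_of_lt ht0)]
  refine ⟨fun k => by rw [hαt k]; exact hgeo k, ?_, ?_⟩
  · -- e → 0
    have hsq : Filter.Tendsto (fun k => e k ^ 2) Filter.atTop (nhds 0) := by
      have h0 : ∀ k, 0 ≤ e k ^ 2 := fun k => sq_nonneg _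
      have hub : ∀ k, e k ^ 2 ≤ t ^ k * (e 0 ^ 2 + γ * η 0 ^ 2) := by
        intro k
        have := hgeo k
        nlinarith [sq_nonneg (η k), hγ]
      have hlim : Filter.Tendsto (fun k => t ^ k * (e 0 ^ 2 + γ * η 0 ^ 2))
          Filter.atTop (nhds 0) := by
        have := (tendsto_pow_atTop_nhds_zero_of_lt_one (le_of_lt ht0) ht1).mul_const
          (e 0 ^ 2 + γ * η 0 ^ 2)
        simpa using this
      exact tendsto_of_tendsto_of_tendsto_of_le_of_le tendsto_const_nhds hlim h0 hub
    have : Filter.Tendsto (fun k => Real.sqrt (e k ^ 2)) Filter.atTop (nhds 0) := by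
      have := (Real.continuous_sqrt.tendsto 0).comp hsq
      simpa [Function.comp_def] using this
    simpa [Real.sqrt_sq (he _)] using this
  · -- η → 0
    have hsq : Filter.Tendsto (fun k => η k ^ 2) Filter.atTop (nhds 0) := by
      have h0 : ∀ k, 0 ≤ η k ^ 2 := fun k => sq_nonneg _
      have hub : ∀ k, η k ^ 2 ≤ t ^ k * ((e 0 ^ 2 + γ * η 0 ^ 2) / γ) := by
        intro k
        have hg := hgeo k
        have hek : 0 ≤ e k ^ 2 := sq_nonneg _
        rw [← mul_div_assoc, le_div_iff₀ hγ]
        nlinarith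
      have hlim : Filter.Tendsto (fun k => t ^ k * ((e 0 ^ 2 + γ * η 0 ^ 2) / γ))
          Filter.atTop (nhds 0) := by
        have := (tendsto_pow_atTop_nhds_zero_of_lt_one (le_of_lt ht0) ht1).mul_const
          ((e 0 ^ 2 + γ * η 0 ^ 2) / γ)
        simpa using this
      exact tendsto_of_tendsto_of_tendsto_of_le_of_le tendsto_const_nhds hlim h0 hub
    have : Filter.Tendsto (fun k => Real.sqrt (η k ^ 2)) Filter.atTop (nhds 0) := by
      have := (Real.continuous_sqrt.tendsto 0).comp hsq
      simpa [Function.comp_def] using this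
    simpa [Real.sqrt_sq (hη _)] using this
end

section
/- For every λ ∈ (0,1) and C > 0, C₁ > 0, C₂ > 0 there exists Λ₀ > 1 such that for every Λ with 1 ≤ Λ < Λ₀ there exist constants μ > 0, ν ∈ (0,1), γ > 0 and α ∈ (0,1) with the following property: whenever (e_k), (d_k), (δ_k), (η_k) are sequences of nonnegative real numbers satisfying for all k ∈ ℕ (i) e_{k+1}² ≤ Λ·e_k² − d_k² (quasi-orthogonality of exact errors), (ii) η_{k+1}² ≤ λ·η_k² + C·(d_k + δ_k + δ_{k+1})² (estimator reduction for inexact solutions), (iii) e_k² ≤ C₁·(η_k + C₂·δ_k)² (reliability plus Lipschitz perturbation), and (iv) μ·δ_k² + δ_{k+1}² ≤ ν·η_k² (approximation property of the inexact solver), one has the contraction e_{k+1}² + γ·η_{k+1}² ≤ α²·(e_k² + γ·η_k²) for all k ∈ ℕ. -/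
set_option maxHeartbeats 1000000 in
/-- Abstract real-sequence form of the contraction theorem for AFEM with
inexact solvers. -/
theorem afem_inexact_contraction
    (lam C C₁ C₂ : ℝ)
    (hlam : lam ∈ Set.Ioo (0:ℝ) 1) (hC : 0 < C) (hC₁ : 0 < C₁) (hC₂ : 0 < C₂) :
    ∃ Λ₀ > (1:ℝ), ∀ Λ : ℝ, 1 ≤ Λ → Λ < Λ₀ →
      ∃ μ > (0:ℝ), ∃ ν ∈ Set.Ioo (0:ℝ) 1, ∃ γ > (0:ℝ), ∃ α ∈ Set.Ioo (0:ℝ) 1,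
        ∀ e d δ η : ℕ → ℝ,
          (∀ k, 0 ≤ e k) → (∀ k, 0 ≤ d k) → (∀ k, 0 ≤ δ k) → (∀ k, 0 ≤ η k) →
          (∀ k, e (k+1) ^ 2 ≤ Λ * e k ^ 2 - d k ^ 2) →
          (∀ k, η (k+1) ^ 2 ≤ lam * η k ^ 2 + C * (d k + δ k + δ (k+1)) ^ 2) →
          (∀ k, e k ^ 2 ≤ C₁ * (η k + C₂ * δ k) ^ 2) →
          (∀ k, μ * δ k ^ 2 + δ (k+1) ^ 2 ≤ ν * η k ^ 2) →
          ∀ k, e (k+1) ^ 2 + γ * η (k+1) ^ 2 ≤ α ^ 2 * (e k ^ 2 + γ * η k ^ 2) := by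
  obtain ⟨hlam0, hlam1⟩ := hlam
  set ν : ℝ := min ((1 - lam) / (8 * C)) (1/2) with hνdef
  set γ : ℝ := 1 / (2 * C) with hγdef
  set K : ℝ := 2 + 2 * C₂ ^ 2 * ν with hKdef
  have hνpos : 0 < ν := lt_min (div_pos (by linarith) (by linarith)) (by norm_num)
  have hν1 : ν < 1 := lt_of_le_of_lt (min_le_right _ _) (by norm_num)
  have hγpos : 0 < γ := by positivity
  have hKpos : 0 < K := by positivity
  have hden : 0 < γ + C₁ * K := by positivity
  refine ⟨1 + γ * (1 - lam) / (4 * C₁ * K), ?_, ?_⟩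
  · have : 0 < γ * (1 - lam) / (4 * C₁ * K) := by
      apply div_pos (mul_pos hγpos (by linarith)) (by positivity)
    linarith
  intro Λ hΛ1 hΛ₀
  set A : ℝ := (γ * ((1 + lam) / 2) + Λ * C₁ * K) / (γ + C₁ * K) with hAdef
  have hCK : 0 < C₁ * K := mul_pos hC₁ hKpos
  have hA0 : 0 < A := by
    apply div_pos _ hden
    nlinarith [mul_pos hγpos (show (0:ℝ) < (1 + lam) / 2 by linarith),
      mul_le_mul_of_nonneg_right hΛ1 hCK.le]
  have hΛcancel : γ * (1 - lam) / (4 * C₁ * K) * (4 * C₁ * K) = γ * (1 - lam) :=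
    div_mul_cancel₀ _ (by positivity)
  have hA1 : A < 1 := by
    rw [div_lt_one hden]
    have h := mul_lt_mul_of_pos_right hΛ₀ hCK
    nlinarith [mul_pos hγpos (sub_pos.mpr hlam1)]
  have hAsq : Real.sqrt A ^ 2 = A := Real.sq_sqrt hA0.le
  have hα1 : Real.sqrt A < 1 := by
    rw [show (1:ℝ) = Real.sqrt 1 by simp]
    exact Real.sqrt_lt_sqrt hA0.le hA1
  refine ⟨1, one_pos, ν, ⟨hνpos, hν1⟩, γ, hγpos, Real.sqrt A,
    ⟨Real.sqrt_pos.mpr hA0, hα1⟩, ?_⟩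
  intro e d δ η he hd hδ hη h1 h2 h3 h4 k
  rw [hAsq]
  -- (iv) with μ = 1
  have hδν : δ k ^ 2 + δ (k+1) ^ 2 ≤ ν * η k ^ 2 := by
    have := h4 k; linarith
  have hδk : δ k ^ 2 ≤ ν * η k ^ 2 := by nlinarith [sq_nonneg (δ (k+1))]
  -- Young-type inequality for the triple sum
  have hsum : (d k + δ k + δ (k+1)) ^ 2
      ≤ 2 * d k ^ 2 + 4 * δ k ^ 2 + 4 * δ (k+1) ^ 2 := by
    nlinarith [sq_nonneg (d k - δ k - δ (k+1)), sq_nonneg (δ k - δ (k+1))]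
  -- estimator reduction with inexactness absorbed
  have hη' : η (k+1) ^ 2 ≤ lam * η k ^ 2 + 2 * C * d k ^ 2 + 4 * C * ν * η k ^ 2 := by
    have h2k := h2 k
    have hc1 := mul_le_mul_of_nonneg_left hsum hC.le
    have hc2 := mul_le_mul_of_nonneg_left hδν (by positivity : (0:ℝ) ≤ 4 * C)
    nlinarith
  have hγC : γ * (2 * C) = 1 := by
    rw [hγdef]; field_simp
  have hd2 : γ * (2 * C) * d k ^ 2 = 1 * d k ^ 2 := by rw [hγC]
  -- key intermediate estimate
  have hstep : e (k+1) ^ 2 + γ * η (k+1) ^ 2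
      ≤ Λ * e k ^ 2 + γ * ((1 + lam) / 2) * η k ^ 2 := by
    have h1k := h1 k
    have hgm := mul_le_mul_of_nonneg_left hη' hγpos.le
    have hνle : ν ≤ (1 - lam) / (8 * C) := min_le_left _ _
    have h8C : 8 * C * ν ≤ 1 - lam := by
      have := mul_le_mul_of_nonneg_left hνle (by positivity : (0:ℝ) ≤ 8 * C)
      have heq : 8 * C * ((1 - lam) / (8 * C)) = 1 - lam := by
        field_simp
      linarith
    have hlm : γ * (lam + 4 * C * ν) * η k ^ 2 ≤ γ * ((1 + lam) / 2) * η k ^ 2 :=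
      mul_le_mul_of_nonneg_right
        (mul_le_mul_of_nonneg_left (by linarith) hγpos.le) (sq_nonneg (η k))
    nlinarith [hgm, hd2, hlm]
  -- reliability bound
  have he3 : e k ^ 2 ≤ C₁ * K * η k ^ 2 := by
    have h3k := h3 k
    have hin : (η k + C₂ * δ k) ^ 2 ≤ K * η k ^ 2 := by
      rw [hKdef]
      have hc := mul_le_mul_of_nonneg_left hδk (sq_nonneg C₂)
      nlinarith [sq_nonneg (η k - C₂ * δ k)]
    have := mul_le_mul_of_nonneg_left hin hC₁.le
    nlinarith
  -- defining identity of A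
  have hAid : A * (γ + C₁ * K) = γ * ((1 + lam) / 2) + Λ * C₁ * K :=
    div_mul_cancel₀ _ (ne_of_gt hden)
  have hAidη : A * (γ + C₁ * K) * η k ^ 2
      = (γ * ((1 + lam) / 2) + Λ * C₁ * K) * η k ^ 2 := by rw [hAid]
  have hΛA : A ≤ Λ := le_trans hA1.le hΛ1
  have hkey := mul_le_mul_of_nonneg_left he3 (sub_nonneg.mpr hΛA)
  clear_value A K γ ν
  linarith [hstep, hkey, hAidη]
end
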